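/- If v : ℝ → ℝ is such that v² is absolutely continuous on [a,b] and v is continuous and nonvanishing on [a,b], then v is absolutely continuous on [a,b]; without the nonvanishing assumption, there exists v with v² absolutely continuous but v not absolutely continuous. -/

import Mathlib

/-- A function is absolutely continuous on `[a, b]` in the classical ε-δ sense. -/
def AbsolutelyContinuousOn (f : ℝ → ℝ) (a b : ℝ) : Prop :=
  ∀ ε > (0:ℝ), ∃ δ > (0:ℝ), ∀ (n : ℕ) (u v : Fin n → ℝ),
    (∀ i, a ≤ u i ∧ u i ≤ v i ∧ v i ≤ b) →
    (∀ i j, i ≠ j → Disjoint (Set.Ioo (u i) (v i)) (Set.Ioo (u j) (v j))) →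
    (∑ i, (v i - u i)) < δ → (∑ i, |f (v i) - f (u i)|) < ε

noncomputable section AuxCounterexample

/-- The set `{0} ∪ {1/(n+1) : n ∈ ℕ}`. -/
def Sct : Set ℝ := insert 0 (Set.range fun n : ℕ => 1 / ((n : ℝ) + 1))

lemma Sct_nonempty : Sct.Nonempty := ⟨0, Or.inl rfl⟩

/-- The counterexample function: square root of the distance to `Sct`. -/
def wfun (t : ℝ) : ℝ := Real.sqrt (Metric.infDist t Sct)

lemma wfun_sq (t : ℝ) : wfun t ^ 2 = Metric.infDist t Sct :=
  Real.sq_sqrt Metric.infDist_nonneg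

lemma le_infDist_of_forall {x b : ℝ} {s : Set ℝ} (hs : s.Nonempty)
    (hb : ∀ y ∈ s, b ≤ dist x y) : b ≤ Metric.infDist x s := by
  rw [Metric.infDist_eq_iInf]
  haveI : Nonempty s := hs.to_subtype
  exact le_ciInf fun y => hb y y.2

lemma infDist_lip (x y : ℝ) :
    |Metric.infDist x Sct - Metric.infDist y Sct| ≤ |x - y| := by
  have h := (Metric.lipschitz_infDist_pt Sct).dist_le_mul x y
  rwa [Real.dist_eq, Real.dist_eq, NNReal.coe_one, one_mul] at h

lemma mem_Sct_inv (n : ℕ) : (1 / ((n : ℝ) + 1)) ∈ Sct :=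
  Or.inr ⟨n, rfl⟩

lemma wfun_zero_on_Sct {t : ℝ} (ht : t ∈ Sct) : wfun t = 0 := by
  unfold wfun
  rw [Metric.infDist_zero_of_mem ht, Real.sqrt_zero]

/-- Lower bound on `wfun` at the midpoint of `[1/(n+1), 1/n]`. -/
lemma wfun_mid_ge (n : ℕ) (hn : 1 ≤ n) :
    1 / (2 * ((n : ℝ) + 1)) ≤ wfun ((1 / (n : ℝ) + 1 / ((n : ℝ) + 1)) / 2) := by
  have hn1 : (1 : ℝ) ≤ (n : ℝ) := by exact_mod_cast hn
  have hnpos : (0 : ℝ) < (n : ℝ) := by linarith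
  set m : ℝ := (1 / (n : ℝ) + 1 / ((n : ℝ) + 1)) / 2 with hm
  have hdist : 1 / (2 * (n : ℝ) * ((n : ℝ) + 1)) ≤ Metric.infDist m Sct := by
    apply le_infDist_of_forall Sct_nonempty
    rintro y (rfl | ⟨k, rfl⟩)
    · rw [Real.dist_eq, sub_zero]
      have hm' : 1 / ((n : ℝ) + 1) ≤ m := by
        rw [hm]
        have : 1 / ((n : ℝ) + 1) ≤ 1 / (n : ℝ) :=
          one_div_le_one_div_of_le hnpos (by linarith)
        linarith
      have : 1 / (2 * (n : ℝ) * ((n : ℝ) + 1)) ≤ 1 / ((n : ℝ) + 1) := by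
        apply one_div_le_one_div_of_le (by linarith)
        nlinarith
      calc 1 / (2 * (n : ℝ) * ((n : ℝ) + 1)) ≤ 1 / ((n : ℝ) + 1) := this
        _ ≤ m := hm'
        _ ≤ |m| := le_abs_self m
    · rw [Real.dist_eq]
      rcases le_or_gt ((k : ℝ) + 1) (n : ℝ) with hk | hk
      · -- 1/(k+1) ≥ 1/n, so the point is to the right of m
        have hy : 1 / (n : ℝ) ≤ 1 / ((k : ℝ) + 1) :=
          one_div_le_one_div_of_le (by positivity) hk
        have hgap : m + 1 / (2 * (n : ℝ) * ((n : ℝ) + 1)) ≤ 1 / (n : ℝ) := by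
          rw [hm]
          have : 1 / (n : ℝ) - 1 / ((n : ℝ) + 1) = 1 / ((n : ℝ) * ((n : ℝ) + 1)) := by
            field_simp
            ring
          have h2 : 1 / (2 * (n : ℝ) * ((n : ℝ) + 1)) = (1 / (n:ℝ) - 1 / ((n:ℝ)+1)) / 2 := by
            field_simp; ring
          rw [h2]; ring_nf; linarith [this]
        have : 1 / (2 * (n : ℝ) * ((n : ℝ) + 1)) ≤ 1 / ((k : ℝ) + 1) - m := by linarith
        calc 1 / (2 * (n : ℝ) * ((n : ℝ) + 1)) ≤ 1 / ((k : ℝ) + 1) - m := this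
          _ = -(m - 1 / ((k : ℝ) + 1)) := by ring
          _ ≤ |m - 1 / ((k : ℝ) + 1)| := neg_le_abs _
      · -- n < k+1 so n+1 ≤ k+1 and the point is to the left of m
        have hk' : n + 1 ≤ k + 1 := by
          have : n < k + 1 := by exact_mod_cast hk
          omega
        have hy : 1 / ((k : ℝ) + 1) ≤ 1 / ((n : ℝ) + 1) := by
          apply one_div_le_one_div_of_le (by linarith)
          exact_mod_cast hk'
        have hgap : 1 / ((n : ℝ) + 1) + 1 / (2 * (n : ℝ) * ((n : ℝ) + 1)) ≤ m := by
          rw [hm]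
          have h2 : 1 / (2 * (n : ℝ) * ((n : ℝ) + 1)) = (1 / (n:ℝ) - 1 / ((n:ℝ)+1)) / 2 := by
            field_simp; ring
          rw [h2]; ring_nf
          have : 1 / ((n : ℝ) + 1) ≤ 1 / (n : ℝ) :=
            one_div_le_one_div_of_le hnpos (by linarith)
          linarith
        have : 1 / (2 * (n : ℝ) * ((n : ℝ) + 1)) ≤ m - 1 / ((k : ℝ) + 1) := by linarith
        calc 1 / (2 * (n : ℝ) * ((n : ℝ) + 1)) ≤ m - 1 / ((k : ℝ) + 1) := this
          _ ≤ |m - 1 / ((k : ℝ) + 1)| := le_abs_self _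
  -- now take square roots
  unfold wfun
  rw [Real.le_sqrt (by positivity) Metric.infDist_nonneg]
  refine le_trans ?_ hdist
  rw [div_pow, one_pow]
  apply one_div_le_one_div_of_le (by positivity)
  nlinarith

lemma wfun_nonneg (t : ℝ) : 0 ≤ wfun t := Real.sqrt_nonneg _

lemma wfun_continuous : Continuous wfun :=
  Real.continuous_sqrt.comp (Metric.continuous_infDist_pt Sct)

lemma wfun_sq_AC : AbsolutelyContinuousOn (fun t => wfun t ^ 2) 0 1 := by
  intro ε hε
  refine ⟨ε, hε, fun n u v hmem _ hlen => ?_⟩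
  calc ∑ i, |wfun (v i) ^ 2 - wfun (u i) ^ 2|
      ≤ ∑ i, (v i - u i) := by
        apply Finset.sum_le_sum
        intro i _
        rw [wfun_sq, wfun_sq]
        have h1 := infDist_lip (v i) (u i)
        have h2 := (hmem i).2.1
        rw [abs_of_nonneg (by linarith : (0:ℝ) ≤ v i - u i)] at h1
        linarith
    _ < ε := hlen

lemma Ioo_disj_lt (p q : ℕ) (hp : 1 ≤ p) (hpq : p < q) :
    Disjoint (Set.Ioo (1/((p:ℝ)+1)) ((1/(p:ℝ) + 1/((p:ℝ)+1))/2))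
             (Set.Ioo (1/((q:ℝ)+1)) ((1/(q:ℝ) + 1/((q:ℝ)+1))/2)) := by
  rw [Set.disjoint_left]
  rintro x ⟨hx1, _⟩ ⟨_, hx4⟩
  have hqpos : (0:ℝ) < (q:ℝ) := by
    have : 0 < q := lt_of_le_of_lt (Nat.zero_le p) hpq
    exact_mod_cast this
  have hcast : (p:ℝ) + 1 ≤ (q:ℝ) := by exact_mod_cast hpq
  have h1 : (1:ℝ)/(q:ℝ) ≤ 1/((p:ℝ)+1) := one_div_le_one_div_of_le (by positivity) hcast
  have h2 : (1/(q:ℝ) + 1/((q:ℝ)+1))/2 < 1/(q:ℝ) := by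
    have : 1/((q:ℝ)+1) < 1/(q:ℝ) := one_div_lt_one_div_of_lt hqpos (by linarith)
    linarith
  linarith

lemma Ioo_disj (p q : ℕ) (hp : 1 ≤ p) (hq : 1 ≤ q) (hpq : p ≠ q) :
    Disjoint (Set.Ioo (1/((p:ℝ)+1)) ((1/(p:ℝ) + 1/((p:ℝ)+1))/2))
             (Set.Ioo (1/((q:ℝ)+1)) ((1/(q:ℝ) + 1/((q:ℝ)+1))/2)) := by
  rcases lt_or_gt_of_ne hpq with h | h
  · exact Ioo_disj_lt p q hp h
  · exact (Ioo_disj_lt q p hq h).symm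

lemma wfun_not_AC : ¬ AbsolutelyContinuousOn wfun 0 1 := by
  intro hACw
  obtain ⟨δ, hδ, H⟩ := hACw 1 one_pos
  obtain ⟨N0, hN0⟩ := exists_nat_gt (1/δ)
  set N : ℕ := N0 + 1 with hNdef
  have hNpos : (0:ℝ) < (N:ℝ) := by positivity
  have hN1 : 1 ≤ N := Nat.le_add_left 1 N0
  have hN0' : 1/δ < (N:ℝ) := by
    refine lt_of_lt_of_le hN0 ?_
    exact_mod_cast Nat.le_succ N0
  have hNδ : 1 / (N:ℝ) < δ := by
    rw [div_lt_iff₀ hNpos]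
    rw [div_lt_iff₀ hδ] at hN0'
    nlinarith
  obtain ⟨M, hM2, hMN⟩ :=
    ((Real.tendsto_sum_range_one_div_nat_succ_atTop.eventually_ge_atTop
      ((∑ j ∈ Finset.range N, 1/((j:ℝ)+1)) + 2)).and (Filter.eventually_ge_atTop N)).exists
  set k : ℕ := M - N with hkdef
  have hMk : M = N + k := by omega
  set gu : ℕ → ℝ := fun j => 1 / (((N + j : ℕ) : ℝ) + 1) with hgu
  set gv : ℕ → ℝ := fun j => (1 / ((N + j : ℕ) : ℝ) + 1 / (((N + j : ℕ) : ℝ) + 1)) / 2 with hgv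
  have hjpos : ∀ j : ℕ, (0:ℝ) < ((N + j : ℕ) : ℝ) := by
    intro j
    have : 0 < N + j := by omega
    exact_mod_cast this
  have hle : ∀ j : ℕ, 1 / (((N + j : ℕ) : ℝ) + 1) ≤ 1 / ((N + j : ℕ) : ℝ) :=
    fun j => one_div_le_one_div_of_le (hjpos j) (by linarith)
  -- membership constraints
  have hmem : ∀ i : Fin k, (0:ℝ) ≤ gu (i:ℕ) ∧ gu (i:ℕ) ≤ gv (i:ℕ) ∧ gv (i:ℕ) ≤ 1 := by
    intro i
    refine ⟨by positivity, ?_, ?_⟩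
    · have := hle (i:ℕ); simp only [hgu, hgv]; linarith
    · have h1 : (1:ℝ) ≤ ((N + (i:ℕ) : ℕ) : ℝ) := by
        have : 1 ≤ N + (i:ℕ) := by omega
        exact_mod_cast this
      have h2 : 1 / ((N + (i:ℕ) : ℕ) : ℝ) ≤ 1 := by
        rw [div_le_one (hjpos _)]; linarith
      have := hle (i:ℕ)
      simp only [hgv]
      linarith
  -- disjointness
  have hdisj : ∀ i j : Fin k, i ≠ j →
      Disjoint (Set.Ioo (gu (i:ℕ)) (gv (i:ℕ))) (Set.Ioo (gu (j:ℕ)) (gv (j:ℕ))) := by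
    intro i j hij
    have hnn : N + (i:ℕ) ≠ N + (j:ℕ) := by
      intro h
      exact hij (Fin.ext (by omega))
    exact Ioo_disj (N + (i:ℕ)) (N + (j:ℕ)) (by omega) (by omega) hnn
  -- length sum
  have hlen : (∑ i : Fin k, (gv (i:ℕ) - gu (i:ℕ))) < δ := by
    have hterm : ∀ j : ℕ, gv j - gu j
        = 1 / (2 * ((N + j : ℕ) : ℝ)) - 1 / (2 * ((N + (j+1) : ℕ) : ℝ)) := by
      intro j
      have h1 : ((N + (j+1) : ℕ) : ℝ) = ((N + j : ℕ) : ℝ) + 1 := by push_cast; ring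
      rw [h1]
      have h2 : ((N + j : ℕ) : ℝ) ≠ 0 := ne_of_gt (hjpos j)
      have h3 : ((N + j : ℕ) : ℝ) + 1 ≠ 0 := by have := hjpos j; linarith
      simp only [hgu, hgv]
      field_simp
      ring
    rw [Fin.sum_univ_eq_sum_range (fun j => gv j - gu j) k]
    rw [Finset.sum_congr rfl (fun j _ => hterm j), Finset.sum_range_sub']
    have h4 : (0:ℝ) < ((N + k : ℕ) : ℝ) := hjpos k
    have h5 : ((N + 0 : ℕ) : ℝ) = (N:ℝ) := by norm_num
    rw [h5]
    have h6 : 0 < 1 / (2 * ((N + k : ℕ) : ℝ)) := by positivity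
    have h7 : 1 / (2 * (N:ℝ)) ≤ 1 / (N:ℝ) := by
      apply one_div_le_one_div_of_le hNpos; linarith
    linarith
  have hcontr := H k (fun i => gu (i:ℕ)) (fun i => gv (i:ℕ)) hmem hdisj hlen
  -- variation sum lower bound
  have hvar : (1:ℝ) ≤ ∑ i : Fin k, |wfun (gv (i:ℕ)) - wfun (gu (i:ℕ))| := by
    have hterm : ∀ j : ℕ, 1 / (2 * (((N + j : ℕ) : ℝ) + 1))
        ≤ |wfun (gv j) - wfun (gu j)| := by
      intro j
      have h0 : wfun (gu j) = 0 := wfun_zero_on_Sct (mem_Sct_inv (N + j))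
      rw [h0, sub_zero, abs_of_nonneg (wfun_nonneg _)]
      exact wfun_mid_ge (N + j) (by omega)
    have hsum1 : ∑ j ∈ Finset.range k, 1 / (2 * (((N + j : ℕ) : ℝ) + 1))
        ≤ ∑ i : Fin k, |wfun (gv (i:ℕ)) - wfun (gu (i:ℕ))| := by
      rw [Fin.sum_univ_eq_sum_range (fun j => |wfun (gv j) - wfun (gu j)|) k]
      exact Finset.sum_le_sum fun j _ => hterm j
    refine le_trans ?_ hsum1
    have hIco : ∑ j ∈ Finset.Ico N M, (1:ℝ) / ((j:ℝ) + 1)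
        = ∑ j ∈ Finset.range k, (1:ℝ) / (((N + j : ℕ) : ℝ) + 1) := by
      rw [Finset.sum_Ico_eq_sum_range]
    have hsub : ∑ j ∈ Finset.Ico N M, (1:ℝ) / ((j:ℝ) + 1)
        = (∑ j ∈ Finset.range M, 1/((j:ℝ)+1)) - ∑ j ∈ Finset.range N, 1/((j:ℝ)+1) := by
      rw [Finset.sum_Ico_eq_sub _ hMN]
    have h2 : (2:ℝ) ≤ ∑ j ∈ Finset.range k, (1:ℝ) / (((N + j : ℕ) : ℝ) + 1) := by
      rw [← hIco, hsub]; linarith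
    have h3 : ∑ j ∈ Finset.range k, 1 / (2 * (((N + j : ℕ) : ℝ) + 1))
        = (∑ j ∈ Finset.range k, (1:ℝ) / (((N + j : ℕ) : ℝ) + 1)) / 2 := by
      rw [Finset.sum_div]
      apply Finset.sum_congr rfl
      intro j _
      have := hjpos j
      field_simp
    rw [h3]
    linarith
  linarith

end AuxCounterexample

theorem stmt_8 (a b : ℝ) (hab : a ≤ b) (v : ℝ → ℝ)
    (hv : ContinuousOn v (Set.Icc a b))
    (hnz : ∀ t ∈ Set.Icc a b, v t ≠ 0)
    (hAC : AbsolutelyContinuousOn (fun t => (v t) ^ 2) a b) :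
    AbsolutelyContinuousOn v a b ∧
    (∃ w : ℝ → ℝ, ContinuousOn w (Set.Icc 0 1) ∧
      AbsolutelyContinuousOn (fun t => (w t) ^ 2) 0 1 ∧
      ¬ AbsolutelyContinuousOn w 0 1) := by
  constructor
  · -- Part 1: nonvanishing continuous v with v² AC is AC
    have hne : (Set.Icc a b).Nonempty := Set.nonempty_Icc.2 hab
    obtain ⟨t₀, ht₀, hmin'⟩ := isCompact_Icc.exists_isMinOn hne
      (continuous_abs.comp_continuousOn hv)
    have hmin : ∀ t ∈ Set.Icc a b, |v t₀| ≤ |v t| := fun t ht => hmin' ht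
    set c := |v t₀| with hc
    have hcpos : 0 < c := abs_pos.2 (hnz t₀ ht₀)
    -- v has constant sign on [a,b]
    have hsign : ∀ x ∈ Set.Icc a b, ∀ y ∈ Set.Icc a b, 0 ≤ v x * v y := by
      intro x hx y hy
      by_contra h
      push_neg at h
      have hsub : Set.uIcc x y ⊆ Set.Icc a b := Set.uIcc_subset_Icc hx hy
      have hIVT := intermediate_value_uIcc (hv.mono hsub)
      have h0 : (0:ℝ) ∈ Set.uIcc (v x) (v y) := by
        rcases mul_neg_iff.1 h with ⟨h1, h2⟩ | ⟨h1, h2⟩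
        · exact Set.mem_uIcc.2 (Or.inr ⟨le_of_lt h2, le_of_lt h1⟩)
        · exact Set.mem_uIcc.2 (Or.inl ⟨le_of_lt h1, le_of_lt h2⟩)
      obtain ⟨z, hz, hz0⟩ := hIVT h0
      exact hnz z (hsub hz) hz0
    have key : ∀ x ∈ Set.Icc a b, ∀ y ∈ Set.Icc a b, 2 * c ≤ |v x + v y| := by
      intro x hx y hy
      have h1 : c ≤ |v x| := hmin x hx
      have h2 : c ≤ |v y| := hmin y hy
      have h3 := hsign x hx y hy
      have hx0 := hnz x hx
      have hy0 := hnz y hy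
      rcases lt_or_gt_of_ne hx0 with h | h
      · have hy' : v y < 0 := by
          rcases lt_or_gt_of_ne hy0 with h' | h'
          · exact h'
          · nlinarith
        rw [abs_of_neg h] at h1
        rw [abs_of_neg hy'] at h2
        rw [abs_of_neg (by linarith : v x + v y < 0)]
        linarith
      · have hy' : 0 < v y := by
          rcases lt_or_gt_of_ne hy0 with h' | h'
          · nlinarith
          · exact h'
        rw [abs_of_pos h] at h1
        rw [abs_of_pos hy'] at h2
        rw [abs_of_pos (by linarith : 0 < v x + v y)]
        linarith
    intro ε hε
    obtain ⟨δ, hδ, H⟩ := hAC (2 * c * ε) (by positivity)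
    refine ⟨δ, hδ, fun n u' v' hmem hdisj hlen => ?_⟩
    have hH := H n u' v' hmem hdisj hlen
    simp only at hH
    have hterm : ∀ i : Fin n,
        |v (v' i) - v (u' i)| ≤ |v (v' i) ^ 2 - v (u' i) ^ 2| / (2 * c) := by
      intro i
      obtain ⟨h1, h2, h3⟩ := hmem i
      have hxm : v' i ∈ Set.Icc a b := ⟨le_trans h1 h2, h3⟩
      have hym : u' i ∈ Set.Icc a b := ⟨h1, le_trans h2 h3⟩
      rw [le_div_iff₀ (by positivity : (0:ℝ) < 2 * c)]
      calc |v (v' i) - v (u' i)| * (2 * c)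
          ≤ |v (v' i) - v (u' i)| * |v (v' i) + v (u' i)| :=
            mul_le_mul_of_nonneg_left (key _ hxm _ hym) (abs_nonneg _)
        _ = |(v (v' i) - v (u' i)) * (v (v' i) + v (u' i))| := (abs_mul _ _).symm
        _ = |v (v' i) ^ 2 - v (u' i) ^ 2| := by
            congr 1
            ring
    calc ∑ i : Fin n, |v (v' i) - v (u' i)|
        ≤ ∑ i : Fin n, |v (v' i) ^ 2 - v (u' i) ^ 2| / (2 * c) :=
          Finset.sum_le_sum fun i _ => hterm i
      _ = (∑ i : Fin n, |v (v' i) ^ 2 - v (u' i) ^ 2|) / (2 * c) := by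
          rw [← Finset.sum_div]
      _ < (2 * c * ε) / (2 * c) := by
          exact (div_lt_div_iff_of_pos_right (by positivity : (0:ℝ) < 2 * c)).2 hH
      _ = ε := by field_simp
  · exact ⟨wfun, wfun_continuous.continuousOn, wfun_sq_AC, wfun_not_AC⟩
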